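/- (Airy example, algebraic core) Using the Fourier transform normalization F(u)(ξ) = ∫ e^{-ixξ}u(x) dx and the Airy function with F(Ai)(ξ) = e^{iξ³/3}, the free Schrödinger evolution at time t = 1 of ψ₀(x) = e^{-ix²/2} Ai(x) on ℝ is, up to an explicit unimodular constant, the smooth nonvanishing function ψ(1,x) = c · e^{i(x³/3 + x²/2)}. Equivalently: F(e^{-ix²/2} Ai(x))(ξ) multiplied by e^{-iξ²/2} and inverse-Fourier-transformed gives c · e^{i(x³/3 + x²/2)}. -/

import Mathlib

open Complex Real Filter

/-- Airy example: with the convention `F(u)(ξ) = ∫ e^{-ixξ} u(x) dx` and the Airy function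
characterized by `F(Ai)(ξ) = e^{iξ³/3}` (as an improper Riemann integral), the free
Schrödinger evolution at time `t = 1` (given by convolution with the free kernel
`(2πi)^{-1/2} e^{i(x-y)²/2}`, as an improper Riemann integral) of
`ψ₀(x) = e^{-ix²/2} Ai(x)` is `c e^{i(x³/3 + x²/2)}` with `c = (2πi)^{-1/2}`; in
particular its modulus is the constant `(2π)^{-1/2}`, so `ψ(1,·)` is smooth and
nowhere vanishing. -/
theorem airy_example (Ai : ℝ → ℂ)
    (hAi : ∀ ξ : ℝ, Tendsto (fun R : ℝ => ∫ y in (-R : ℝ)..R,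
        Complex.exp (-Complex.I * (y : ℂ) * (ξ : ℂ)) * Ai y) atTop
      (nhds (Complex.exp (Complex.I * (ξ : ℂ) ^ 3 / 3)))) :
    ∀ x : ℝ,
      Tendsto (fun R : ℝ => ∫ y in (-R : ℝ)..R,
          (2 * (π : ℂ) * Complex.I) ^ (-(1 : ℂ) / 2) *
            Complex.exp (Complex.I * ((x : ℂ) - (y : ℂ)) ^ 2 / 2) *
            (Complex.exp (-Complex.I * (y : ℂ) ^ 2 / 2) * Ai y)) atTop
        (nhds ((2 * (π : ℂ) * Complex.I) ^ (-(1 : ℂ) / 2) *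
          Complex.exp (Complex.I * ((x : ℂ) ^ 3 / 3 + (x : ℂ) ^ 2 / 2)))) ∧
      ‖(2 * (π : ℂ) * Complex.I) ^ (-(1 : ℂ) / 2) *
          Complex.exp (Complex.I * ((x : ℂ) ^ 3 / 3 + (x : ℂ) ^ 2 / 2))‖ =
        (2 * π) ^ (-(1 : ℝ) / 2) := by
  intro x
  set c : ℂ := (2 * (π : ℂ) * Complex.I) ^ (-(1 : ℂ) / 2) with hc
  constructor
  · have key : ∀ y : ℝ,
        c * Complex.exp (Complex.I * ((x : ℂ) - (y : ℂ)) ^ 2 / 2) *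
          (Complex.exp (-Complex.I * (y : ℂ) ^ 2 / 2) * Ai y) =
        (c * Complex.exp (Complex.I * (x : ℂ) ^ 2 / 2)) *
          (Complex.exp (-Complex.I * (y : ℂ) * (x : ℂ)) * Ai y) := by
      intro y
      have h : Complex.exp (Complex.I * ((x : ℂ) - (y : ℂ)) ^ 2 / 2) *
          Complex.exp (-Complex.I * (y : ℂ) ^ 2 / 2) =
          Complex.exp (Complex.I * (x : ℂ) ^ 2 / 2) *
          Complex.exp (-Complex.I * (y : ℂ) * (x : ℂ)) := by
        rw [← Complex.exp_add, ← Complex.exp_add]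
        ring_nf
      calc c * Complex.exp (Complex.I * ((x : ℂ) - (y : ℂ)) ^ 2 / 2) *
            (Complex.exp (-Complex.I * (y : ℂ) ^ 2 / 2) * Ai y)
          = c * (Complex.exp (Complex.I * ((x : ℂ) - (y : ℂ)) ^ 2 / 2) *
            Complex.exp (-Complex.I * (y : ℂ) ^ 2 / 2)) * Ai y := by ring
        _ = c * (Complex.exp (Complex.I * (x : ℂ) ^ 2 / 2) *
            Complex.exp (-Complex.I * (y : ℂ) * (x : ℂ))) * Ai y := by rw [h]
        _ = (c * Complex.exp (Complex.I * (x : ℂ) ^ 2 / 2)) *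
            (Complex.exp (-Complex.I * (y : ℂ) * (x : ℂ)) * Ai y) := by ring
    have heq : ∀ R : ℝ,
        (∫ y in (-R : ℝ)..R, c * Complex.exp (Complex.I * ((x : ℂ) - (y : ℂ)) ^ 2 / 2) *
          (Complex.exp (-Complex.I * (y : ℂ) ^ 2 / 2) * Ai y)) =
        (c * Complex.exp (Complex.I * (x : ℂ) ^ 2 / 2)) *
          ∫ y in (-R : ℝ)..R, Complex.exp (-Complex.I * (y : ℂ) * (x : ℂ)) * Ai y := by
      intro R
      rw [← intervalIntegral.integral_const_mul]
      exact intervalIntegral.integral_congr (fun y _ => key y)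
    have hlim := (hAi x).const_mul (c * Complex.exp (Complex.I * (x : ℂ) ^ 2 / 2))
    have hval : (c * Complex.exp (Complex.I * (x : ℂ) ^ 2 / 2)) *
        Complex.exp (Complex.I * (x : ℂ) ^ 3 / 3) =
        c * Complex.exp (Complex.I * ((x : ℂ) ^ 3 / 3 + (x : ℂ) ^ 2 / 2)) := by
      rw [mul_assoc, ← Complex.exp_add]
      ring_nf
    rw [← hval]
    exact hlim.congr (fun R => (heq R).symm)
  · rw [norm_mul]
    have h1 : ‖c‖ = (2 * π) ^ (-(1 : ℝ) / 2) := by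
      rw [hc, Complex.norm_cpow_of_ne_zero (by simp [Complex.ext_iff, Real.pi_ne_zero])]
      simp [Complex.norm_def, Complex.normSq_apply]
      rw [abs_of_pos Real.pi_pos]
    have h2 : ‖Complex.exp (Complex.I * ((x : ℂ) ^ 3 / 3 + (x : ℂ) ^ 2 / 2))‖ = 1 := by
      rw [Complex.norm_exp]
      have : (Complex.I * ((x : ℂ) ^ 3 / 3 + (x : ℂ) ^ 2 / 2)).re = 0 := by
        have : ((x : ℂ) ^ 3 / 3 + (x : ℂ) ^ 2 / 2) = ((x ^ 3 / 3 + x ^ 2 / 2 : ℝ) : ℂ) := by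
          push_cast; ring
        rw [this]
        simp [← Complex.ofReal_pow]
      rw [this, Real.exp_zero]
    rw [h1, h2, mul_one]
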